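/- arXiv:1907.03093 — 8 statements merged into one kernel-verified Lean document; each statement's English description precedes it below -/
import Mathlib

section
/- Suppose ac − b² ≠ 0. Then ω* solves the mean-variance optimisation problem: for every feasible portfolio ω ∈ ℝⁿ (i.e. 𝟙ᵀω = 1 and μᵀω = μ₀), one has ω*ᵀΣω* ≤ ωᵀΣω. -/
open Matrix

/-- The candidate portfolio `ω*` solves the mean-variance optimisation problem:
for every feasible portfolio `ω` (i.e. `𝟙ᵀω = 1`, `μᵀω = μ₀`),
`ω*ᵀ Σ ω* ≤ ωᵀ Σ ω`. -/
theorem mvo_candidate_optimal (n : ℕ) (hn : 1 ≤ n)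
    (S : Matrix (Fin n) (Fin n) ℝ) (hS : S.PosDef)
    (μ : Fin n → ℝ) (μ₀ : ℝ)
    (a b c : ℝ)
    (ha : a = (1 : Fin n → ℝ) ⬝ᵥ (S⁻¹ *ᵥ (1 : Fin n → ℝ)))
    (hb : b = (1 : Fin n → ℝ) ⬝ᵥ (S⁻¹ *ᵥ μ))
    (hc : c = μ ⬝ᵥ (S⁻¹ *ᵥ μ))
    (hdet : a * c - b ^ 2 ≠ 0)
    (ωstar : Fin n → ℝ)
    (hωstar : ωstar = ((c - b * μ₀) / (a * c - b ^ 2)) • (S⁻¹ *ᵥ (1 : Fin n → ℝ))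
            + ((a * μ₀ - b) / (a * c - b ^ 2)) • (S⁻¹ *ᵥ μ)) :
    ∀ ω : Fin n → ℝ, (1 : Fin n → ℝ) ⬝ᵥ ω = 1 → μ ⬝ᵥ ω = μ₀ →
      ωstar ⬝ᵥ (S *ᵥ ωstar) ≤ ω ⬝ᵥ (S *ᵥ ω) := by
  intro ω h1 h2
  set α := (c - b * μ₀) / (a * c - b ^ 2) with hα
  set β := (a * μ₀ - b) / (a * c - b ^ 2) with hβ
  have hdetS : IsUnit S.det := hS.det_pos.ne'.isUnit
  have hinv : ∀ v : Fin n → ℝ, S *ᵥ (S⁻¹ *ᵥ v) = v := by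
    intro v
    rw [mulVec_mulVec, Matrix.mul_nonsing_inv S hdetS, one_mulVec]
  -- symmetry of S and S⁻¹
  have hsymS : Sᵀ = S := hS.isHermitian
  have hsymI : (S⁻¹)ᵀ = S⁻¹ := hS.isHermitian.inv
  have hsym : ∀ u v : Fin n → ℝ, u ⬝ᵥ (S *ᵥ v) = (S *ᵥ u) ⬝ᵥ v := by
    intro u v
    rw [dotProduct_mulVec, ← mulVec_transpose, hsymS]
  have hb' : μ ⬝ᵥ (S⁻¹ *ᵥ (1 : Fin n → ℝ)) = b := by
    rw [hb, dotProduct_mulVec, ← mulVec_transpose, hsymI, dotProduct_comm]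
  -- S ω* = α • 𝟙 + β • μ
  have hSω : S *ᵥ ωstar = α • (1 : Fin n → ℝ) + β • μ := by
    rw [hωstar, mulVec_add, mulVec_smul, mulVec_smul, hinv, hinv]
  -- constraints satisfied by ω*
  have hc1 : (1 : Fin n → ℝ) ⬝ᵥ ωstar = 1 := by
    rw [hωstar, dotProduct_add, dotProduct_smul, dotProduct_smul, ← ha, ← hb]
    rw [hα, hβ]; simp only [smul_eq_mul]
    rw [div_mul_eq_mul_div, div_mul_eq_mul_div, ← add_div, div_eq_iff hdet]
    ring
  have hc2 : μ ⬝ᵥ ωstar = μ₀ := by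
    rw [hωstar, dotProduct_add, dotProduct_smul, dotProduct_smul, hb']
    rw [show μ ⬝ᵥ (S⁻¹ *ᵥ μ) = c from hc.symm]
    rw [hα, hβ]; simp only [smul_eq_mul]
    rw [div_mul_eq_mul_div, div_mul_eq_mul_div, ← add_div, div_eq_iff hdet]
    ring
  -- cross term vanishes
  set d := ω - ωstar with hd
  have hcross : (S *ᵥ ωstar) ⬝ᵥ d = 0 := by
    rw [hSω, add_dotProduct, smul_dotProduct, smul_dotProduct, hd,
      dotProduct_sub, dotProduct_sub, h1, h2, hc1, hc2]
    simp
  have hω : ω = ωstar + d := by rw [hd]; abel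
  have hpos : 0 ≤ d ⬝ᵥ (S *ᵥ d) := by
    have := hS.posSemidef.dotProduct_mulVec_nonneg d
    simpa using this
  have hexp : ω ⬝ᵥ (S *ᵥ ω) = ωstar ⬝ᵥ (S *ᵥ ωstar) + 2 * ((S *ᵥ ωstar) ⬝ᵥ d) + d ⬝ᵥ (S *ᵥ d) := by
    rw [hω, mulVec_add, dotProduct_add, add_dotProduct, add_dotProduct]
    have h3 : d ⬝ᵥ (S *ᵥ ωstar) = (S *ᵥ ωstar) ⬝ᵥ d := dotProduct_comm _ _
    have h4 : ωstar ⬝ᵥ (S *ᵥ d) = (S *ᵥ ωstar) ⬝ᵥ d := hsym _ _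
    rw [h3, h4]; ring
  rw [hexp, hcross]
  linarith
end

section
/- Suppose ac − b² ≠ 0. Then ω* is the unique minimiser of the portfolio variance among feasible portfolios: for every feasible ω ∈ ℝⁿ with ω ≠ ω*, one has ω*ᵀΣω* < ωᵀΣω. -/
open Matrix

private lemma symm_dot_swap {n : ℕ} (S : Matrix (Fin n) (Fin n) ℝ)
    (hsymm : Sᵀ = S) (x y : Fin n → ℝ) :
    x ⬝ᵥ (S *ᵥ y) = y ⬝ᵥ (S *ᵥ x) := by
  rw [Matrix.dotProduct_mulVec, ← Matrix.mulVec_transpose, hsymm,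
    dotProduct_comm]

/-- The candidate portfolio `ω*` solves the mean-variance optimisation problem:
ω* is the unique minimiser of the variance among feasible portfolios:
`ω*ᵀ Σ ω* < ωᵀ Σ ω` whenever `ω ≠ ω*`. -/
theorem mvo_candidate_unique_min (n : ℕ) (hn : 1 ≤ n)
    (S : Matrix (Fin n) (Fin n) ℝ) (hS : S.PosDef)
    (μ : Fin n → ℝ) (μ₀ : ℝ)
    (a b c : ℝ)
    (ha : a = (1 : Fin n → ℝ) ⬝ᵥ (S⁻¹ *ᵥ (1 : Fin n → ℝ)))
    (hb : b = (1 : Fin n → ℝ) ⬝ᵥ (S⁻¹ *ᵥ μ))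
    (hc : c = μ ⬝ᵥ (S⁻¹ *ᵥ μ))
    (hdet : a * c - b ^ 2 ≠ 0)
    (ωstar : Fin n → ℝ)
    (hωstar : ωstar = ((c - b * μ₀) / (a * c - b ^ 2)) • (S⁻¹ *ᵥ (1 : Fin n → ℝ))
            + ((a * μ₀ - b) / (a * c - b ^ 2)) • (S⁻¹ *ᵥ μ)) :
    ∀ ω : Fin n → ℝ, (1 : Fin n → ℝ) ⬝ᵥ ω = 1 → μ ⬝ᵥ ω = μ₀ → ω ≠ ωstar →
      ωstar ⬝ᵥ (S *ᵥ ωstar) < ω ⬝ᵥ (S *ᵥ ω) := by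
  intro ω hω1 hωμ hne
  have hSsymm : Sᵀ = S := hS.isHermitian.eq
  have hSinvsymm : (S⁻¹)ᵀ = S⁻¹ := (Matrix.IsHermitian.inv hS.isHermitian).eq
  have hunit : IsUnit S.det := isUnit_iff_ne_zero.mpr hS.det_pos.ne'
  have hSS : S * S⁻¹ = 1 := Matrix.mul_nonsing_inv S hunit
  set lam : ℝ := (c - b * μ₀) / (a * c - b ^ 2) with hlam
  set gam : ℝ := (a * μ₀ - b) / (a * c - b ^ 2) with hgam
  -- S ωstar = lam • 1 + gam • μ
  have hSω : S *ᵥ ωstar = lam • (1 : Fin n → ℝ) + gam • μ := by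
    rw [hωstar, Matrix.mulVec_add, Matrix.mulVec_smul, Matrix.mulVec_smul,
      Matrix.mulVec_mulVec, Matrix.mulVec_mulVec, hSS, Matrix.one_mulVec,
      Matrix.one_mulVec]
  -- constraints satisfied by ωstar
  have h1ω : (1 : Fin n → ℝ) ⬝ᵥ ωstar = 1 := by
    rw [hωstar, dotProduct_add, dotProduct_smul,
      dotProduct_smul, ← ha, ← hb]
    rw [hlam, hgam, smul_eq_mul, smul_eq_mul, div_mul_eq_mul_div, div_mul_eq_mul_div, ← add_div, div_eq_iff hdet]
    ring
  have hμS1 : μ ⬝ᵥ (S⁻¹ *ᵥ (1 : Fin n → ℝ)) = b := by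
    rw [symm_dot_swap S⁻¹ hSinvsymm, ← hb]
  have hμω : μ ⬝ᵥ ωstar = μ₀ := by
    rw [hωstar, dotProduct_add, dotProduct_smul,
      dotProduct_smul, hμS1, ← hc]
    rw [hlam, hgam, smul_eq_mul, smul_eq_mul, div_mul_eq_mul_div, div_mul_eq_mul_div, ← add_div, div_eq_iff hdet]
    ring
  -- decompose
  set d : Fin n → ℝ := ω - ωstar with hd
  have hdne : d ≠ 0 := sub_ne_zero.mpr hne
  have hcross : d ⬝ᵥ (S *ᵥ ωstar) = 0 := by
    rw [hSω, dotProduct_add, dotProduct_smul, dotProduct_smul,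
      hd, sub_dotProduct, sub_dotProduct,
      dotProduct_comm ω (1 : Fin n → ℝ), hω1,
      dotProduct_comm ωstar (1 : Fin n → ℝ), h1ω,
      dotProduct_comm ω μ, hωμ, dotProduct_comm ωstar μ, hμω]
    simp
  have hdpos : 0 < d ⬝ᵥ (S *ᵥ d) := hS.dotProduct_mulVec_pos hdne
  have hωd : ω = ωstar + d := by rw [hd]; ring
  have hexp : ω ⬝ᵥ (S *ᵥ ω)
      = ωstar ⬝ᵥ (S *ᵥ ωstar) + 2 * (d ⬝ᵥ (S *ᵥ ωstar)) + d ⬝ᵥ (S *ᵥ d) := by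
    rw [hωd, Matrix.mulVec_add]
    simp only [add_dotProduct, dotProduct_add]
    rw [symm_dot_swap S hSsymm ωstar d]
    ring
  rw [hexp, hcross]
  linarith
end

section
/- The multi-stock HJB objective g attains its maximum over θ ∈ ℝᴺ uniquely at the vector θ* = (1/γ)(σσᵀ)⁻¹(μ − r𝟙)e^{−rτ} − (σᵀ)⁻¹h e^{−rτ}: for every θ ∈ ℝᴺ one has g(θ) ≤ g(θ*), with equality if and only if θ = θ*. (This is the optimal time-consistent investment policy in a multiple-stock market, consisting of a myopic demand and a hedging demand.) -/
open Real Matrix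

/-- The multi-stock HJB objective
`g(θ) = θᵀ(μ − r𝟙)e^{rτ} − (γ/2)[θᵀ(σσᵀ)θ e^{2rτ} + 2θᵀσh e^{rτ}]`
attains its maximum over `θ ∈ ℝᴺ` uniquely at the optimal time-consistent
policy `θ* = (1/γ)(σσᵀ)⁻¹(μ − r𝟙)e^{−rτ} − (σᵀ)⁻¹h e^{−rτ}`
(myopic demand plus hedging demand). -/
theorem hjb_optimal_policy_multi_stock
    (N : ℕ) (hN : 1 ≤ N)
    (σ : Matrix (Fin N) (Fin N) ℝ) (hσ : IsUnit σ.det)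
    (μ : Fin N → ℝ) (r : ℝ) (γ : ℝ) (hγ : 0 < γ) (τ : ℝ) (hτ : 0 ≤ τ)
    (h : Fin N → ℝ)
    (g : (Fin N → ℝ) → ℝ)
    (hg : ∀ θ : Fin N → ℝ, g θ = (θ ⬝ᵥ (μ - r • (1 : Fin N → ℝ))) * exp (r * τ)
        - (γ / 2) * ((θ ⬝ᵥ ((σ * σᵀ) *ᵥ θ)) * exp (2 * (r * τ))
            + 2 * (θ ⬝ᵥ (σ *ᵥ h)) * exp (r * τ)))
    (θstar : Fin N → ℝ)
    (hθstar : θstar = (exp (-(r * τ)) / γ) • ((σ * σᵀ)⁻¹ *ᵥ (μ - r • (1 : Fin N → ℝ)))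
        - exp (-(r * τ)) • ((σᵀ)⁻¹ *ᵥ h)) :
    ∀ θ : Fin N → ℝ, g θ ≤ g θstar ∧ (g θ = g θstar ↔ θ = θstar) := by
  intro θ
  set c : ℝ := exp (r * τ) with hc
  have hc0 : 0 < c := exp_pos _
  have hcne : c ≠ 0 := ne_of_gt hc0
  have hγne : γ ≠ 0 := ne_of_gt hγ
  set A : Matrix (Fin N) (Fin N) ℝ := σ * σᵀ with hA
  have hAdet : IsUnit A.det := by
    rw [hA, Matrix.det_mul, Matrix.det_transpose]; exact hσ.mul hσ
  have hσT : IsUnit σᵀ.det := by rw [Matrix.det_transpose]; exact hσ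
  set m : Fin N → ℝ := μ - r • (1 : Fin N → ℝ) with hm
  have hexpneg : exp (-(r * τ)) = c⁻¹ := by rw [Real.exp_neg]
  -- key first-order condition
  have hkey : A *ᵥ θstar = (c⁻¹ / γ) • m - c⁻¹ • (σ *ᵥ h) := by
    rw [hθstar, hexpneg, Matrix.mulVec_sub, Matrix.mulVec_smul, Matrix.mulVec_smul,
      Matrix.mulVec_mulVec, Matrix.mulVec_mulVec, Matrix.mul_nonsing_inv _ hAdet]
    have : A * (σᵀ)⁻¹ = σ := by
      rw [hA, Matrix.mul_assoc, Matrix.mul_nonsing_inv _ hσT, Matrix.mul_one]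
    rw [this, Matrix.one_mulVec]
  -- symmetry of A
  have hsymm : ∀ x y : Fin N → ℝ, x ⬝ᵥ A *ᵥ y = y ⬝ᵥ A *ᵥ x := by
    intro x y
    have hAT : Aᵀ = A := by rw [hA, Matrix.transpose_mul, Matrix.transpose_transpose]
    rw [Matrix.dotProduct_mulVec x A y, ← Matrix.mulVec_transpose, hAT, dotProduct_comm]
  -- abbreviations
  have hdotkey : ∀ x : Fin N → ℝ, x ⬝ᵥ A *ᵥ θstar
      = (c⁻¹ / γ) * (x ⬝ᵥ m) - c⁻¹ * (x ⬝ᵥ (σ *ᵥ h)) := by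
    intro x
    rw [hkey, dotProduct_sub, dotProduct_smul, dotProduct_smul]
    simp [smul_eq_mul]
  -- the completed-square identity
  have hquad : ∀ x : Fin N → ℝ,
      g x - g θstar = -(γ / 2) * c ^ 2 * ((x - θstar) ⬝ᵥ A *ᵥ (x - θstar)) := by
    intro x
    have hexp2 : exp (2 * (r * τ)) = c ^ 2 := by
      rw [two_mul, Real.exp_add]; ring
    have e1 : (x - θstar) ⬝ᵥ A *ᵥ (x - θstar)
        = x ⬝ᵥ A *ᵥ x - 2 * (x ⬝ᵥ A *ᵥ θstar) + θstar ⬝ᵥ A *ᵥ θstar := by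
      rw [Matrix.mulVec_sub, dotProduct_sub, sub_dotProduct,
        sub_dotProduct, hsymm θstar x]
      ring
    rw [hg x, hg θstar, hexp2, e1, hdotkey x, hdotkey θstar]
    field_simp
    ring
  have hquad' := hquad θ
  -- positivity of the quadratic form
  set d : Fin N → ℝ := θ - θstar with hd
  have hform : d ⬝ᵥ A *ᵥ d = (σᵀ *ᵥ d) ⬝ᵥ (σᵀ *ᵥ d) := by
    rw [hA, ← Matrix.mulVec_mulVec, Matrix.dotProduct_mulVec, ← Matrix.mulVec_transpose]
  have hpos : 0 ≤ d ⬝ᵥ A *ᵥ d := by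
    rw [hform]
    exact Finset.sum_nonneg fun i _ => mul_self_nonneg _
  have hzero : d ⬝ᵥ A *ᵥ d = 0 ↔ θ = θstar := by
    constructor
    · intro h0
      rw [hform] at h0
      have : σᵀ *ᵥ d = 0 := by
        ext i
        have := Finset.sum_eq_zero_iff_of_nonneg
          (fun i _ => mul_self_nonneg ((σᵀ *ᵥ d) i)) |>.mp h0 i (Finset.mem_univ i)
        have := mul_self_eq_zero.mp this
        simpa using this
      have hdz : d = 0 := by
        have := congrArg (fun v => (σᵀ)⁻¹ *ᵥ v) this
        simpa [Matrix.mulVec_mulVec, Matrix.nonsing_inv_mul _ hσT, Matrix.one_mulVec] using this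
      rw [hd] at hdz
      exact sub_eq_zero.mp hdz
    · intro h0
      rw [hd, h0]
      simp
  constructor
  · nlinarith [hquad', hpos, sq_nonneg c, mul_pos hγ (mul_pos hc0 hc0)]
  · constructor
    · intro he
      rw [he, sub_self] at hquad'
      have hc2 : (0:ℝ) < γ / 2 * c ^ 2 := by positivity
      have : d ⬝ᵥ A *ᵥ d = 0 := by
        by_contra hne
        have : -(γ / 2) * c ^ 2 * (d ⬝ᵥ A *ᵥ d) < 0 := by
          have hdpos : 0 < d ⬝ᵥ A *ᵥ d := lt_of_le_of_ne hpos (Ne.symm hne)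
          nlinarith
        linarith [this, hquad'.symm]
      exact hzero.mp this
    · intro he
      rw [he]
end

section
/- Ŵ is the optimal terminal wealth of the mean-variance optimizer under precommitment: for every square-integrable random variable W with E[ξW] ≤ W₀, one has E[W] − (γ/2)Var[W] ≤ E[Ŵ] − (γ/2)Var[Ŵ]. -/
open MeasureTheory ProbabilityTheory Real

/-- `Ŵ` is the optimal terminal wealth of the mean-variance optimizer under
precommitment: for every square-integrable `W` with `E[ξW] ≤ W₀`,
`E[W] − (γ/2)Var[W] ≤ E[Ŵ] − (γ/2)Var[Ŵ]`. -/
theorem precommitment_optimal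
    {Ω : Type*} [MeasurableSpace Ω] (P : Measure Ω) [IsProbabilityMeasure P]
    (T r γ W₀ : ℝ) (hT : 0 < T) (hγ : 0 < γ)
    (ξ : Ω → ℝ) (hξ : MemLp ξ 2 P)
    (hξpos : ∀ᵐ ω ∂P, 0 < ξ ω)
    (hξmean : ∫ ω, ξ ω ∂P = exp (-(r * T)))
    (What : Ω → ℝ)
    (hWhat : ∀ ω, What ω = W₀ * exp (r * T)
        + (1 / γ) * (∫ ω', (ξ ω') ^ 2 ∂P) * exp (2 * (r * T))
        - (1 / γ) * ξ ω * exp (r * T)) :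
    ∀ W : Ω → ℝ, MemLp W 2 P → (∫ ω, ξ ω * W ω ∂P) ≤ W₀ →
      (∫ ω, W ω ∂P) - (γ / 2) * variance W P
        ≤ (∫ ω, What ω ∂P) - (γ / 2) * variance What P := by
  intro W hW hbudget
  set a : ℝ := exp (r * T) with ha_def
  have ha : 0 < a := exp_pos _
  set ee : ℝ := exp (-(r * T)) with he_def
  have hae : a * ee = 1 := by
    rw [ha_def, he_def, ← Real.exp_add]; simp
  set m : ℝ := ∫ ω', (ξ ω') ^ 2 ∂P with hm_def
  set A : ℝ := W₀ * a + (1 / γ) * m * (a * a) with hA_def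
  set B : ℝ := (1 / γ) * a with hB_def
  have hWhat' : What = fun ω => A - B * ξ ω := by
    funext ω
    rw [hWhat, show exp (2 * (r * T)) = a * a by rw [two_mul, Real.exp_add]]
    ring
  -- basic integrability
  have iξ : Integrable ξ P := hξ.integrable one_le_two
  have iW : Integrable W P := hW.integrable one_le_two
  have iξ2 : Integrable (fun ω => ξ ω ^ 2) P := hξ.integrable_sq
  have iW2 : Integrable (fun ω => W ω ^ 2) P := hW.integrable_sq
  have iξW : Integrable (fun ω => ξ ω * W ω) P := by
    have h := (((hξ.add hW).integrable_sq.sub iξ2).sub iW2).div_const 2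
    refine h.congr (Filter.Eventually.of_forall fun ω => ?_)
    simp only [Pi.sub_apply, Pi.add_apply]
    ring
  set μ : ℝ := ∫ ω, W ω ∂P with hμ_def
  set q : ℝ := ∫ ω, W ω ^ 2 ∂P with hq_def
  set ν : ℝ := ∫ ω, ξ ω * W ω ∂P with hν_def
  -- variance of W
  have hvarW : variance W P = q - μ ^ 2 := by
    rw [variance_eq_sub hW]; rfl
  -- MemLp of What
  have hWhatL2 : MemLp What 2 P := by
    rw [hWhat']
    exact (memLp_const A).sub (hξ.const_mul B)
  -- integral of What
  have hintWhat : ∫ ω, What ω ∂P = A - B * ee := by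
    have i1 : Integrable (fun ω => B * ξ ω) P := iξ.const_mul B
    rw [hWhat', integral_sub (integrable_const A) i1, integral_const,
      integral_const_mul, hξmean]
    simp
  -- integral of What^2
  have hintWhat2 : ∫ ω, What ω ^ 2 ∂P = A ^ 2 - 2 * A * B * ee + B ^ 2 * m := by
    have h1 : (fun ω => What ω ^ 2)
        = fun ω => (A ^ 2 - (2 * A * B) * ξ ω) + B ^ 2 * ξ ω ^ 2 := by
      funext ω; rw [hWhat']; ring
    have i1 : Integrable (fun ω => A ^ 2 - (2 * A * B) * ξ ω) P :=
      (integrable_const _).sub (iξ.const_mul _)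
    have i2 : Integrable (fun ω => B ^ 2 * ξ ω ^ 2) P := iξ2.const_mul _
    rw [h1, integral_add i1 i2,
      integral_sub (integrable_const _) (iξ.const_mul _),
      integral_const, integral_const_mul, integral_const_mul, hξmean]
    simp only [measure_univ, probReal_univ, ENNReal.toReal_one, smul_eq_mul, one_mul, ← hm_def]
  have hvarWhat : variance What P
      = (A ^ 2 - 2 * A * B * ee + B ^ 2 * m) - (A - B * ee) ^ 2 := by
    rw [variance_eq_sub hWhatL2]
    simp only [Pi.pow_apply]
    rw [hintWhat2, hintWhat]
  -- nonnegativity of variance of Z := W + B • ξ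
  have hZL2 : MemLp (fun ω => W ω + B * ξ ω) 2 P := hW.add (hξ.const_mul B)
  have hZvar := variance_nonneg (fun ω => W ω + B * ξ ω) P
  have hZcalc : variance (fun ω => W ω + B * ξ ω) P
      = (q + 2 * B * ν + B ^ 2 * m) - (μ + B * ee) ^ 2 := by
    rw [variance_eq_sub hZL2]
    simp only [Pi.pow_apply]
    have h1 : (fun ω => (W ω + B * ξ ω) ^ 2)
        = fun ω => (W ω ^ 2 + (2 * B) * (ξ ω * W ω)) + B ^ 2 * ξ ω ^ 2 := by
      funext ω; ring
    have i1 : Integrable (fun ω => W ω ^ 2 + (2 * B) * (ξ ω * W ω)) P :=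
      iW2.add (iξW.const_mul _)
    have i2 : Integrable (fun ω => B ^ 2 * ξ ω ^ 2) P := iξ2.const_mul _
    have h2 : ∫ ω, (W ω + B * ξ ω) ^ 2 ∂P = q + 2 * B * ν + B ^ 2 * m := by
      rw [h1, integral_add i1 i2, integral_add iW2 (iξW.const_mul _),
        integral_const_mul, integral_const_mul, ← hm_def, ← hq_def, ← hν_def]
    have h3 : ∫ ω, W ω + B * ξ ω ∂P = μ + B * ee := by
      rw [integral_add iW (iξ.const_mul _), integral_const_mul, hξmean, ← hμ_def]
    rw [h2, h3]
  rw [hZcalc] at hZvar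
  -- scalar relations
  have hγB : γ * B = a := by rw [hB_def]; field_simp
  have hs : γ * (B * ee) = 1 := by
    rw [hB_def]
    field_simp
    linear_combination hae
  have hA' : A = W₀ * a + γ * m * B ^ 2 := by
    rw [hA_def, hB_def]
    field_simp
  -- key scalar inequality
  have key : μ - γ / 2 * (q - μ ^ 2) ≤ A - B * ee - γ / 2 * (B ^ 2 * m - (B * ee) ^ 2) := by
    have hineq1 : 0 ≤ γ * (q + 2 * B * ν + B ^ 2 * m - (μ + B * ee) ^ 2) :=
      mul_nonneg hγ.le hZvar
    have hineq2 : a * ν ≤ a * W₀ := mul_le_mul_of_nonneg_left hbudget ha.le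
    have hid : (A - B * ee - γ / 2 * (B ^ 2 * m - (B * ee) ^ 2)) - (μ - γ / 2 * (q - μ ^ 2))
        = (1 / 2) * (γ * (q + 2 * B * ν + B ^ 2 * m - (μ + B * ee) ^ 2))
          + (a * W₀ - a * ν) := by
      linear_combination hA' + (B * ee + μ) * hs - ν * hγB
    linarith
  rw [hvarW, hintWhat, hvarWhat,
    show (A ^ 2 - 2 * A * B * ee + B ^ 2 * m) - (A - B * ee) ^ 2
      = B ^ 2 * m - (B * ee) ^ 2 from by ring]
  exact key
end

section
/- Ŵ is the unique optimizer of the precommitment problem: if W is square-integrable with E[ξW] ≤ W₀ and E[W] − (γ/2)Var[W] = E[Ŵ] − (γ/2)Var[Ŵ], then W = Ŵ almost surely. -/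
open MeasureTheory ProbabilityTheory Real

private lemma integrable_mul_of_memL2 {Ω : Type*} [MeasurableSpace Ω] {P : Measure Ω}
    {f g : Ω → ℝ} (hf : MemLp f 2 P) (hg : MemLp g 2 P) :
    Integrable (fun ω => f ω * g ω) P := by
  refine Integrable.mono' ((hf.integrable_sq.add hg.integrable_sq).const_mul (1/2))
    (hf.aestronglyMeasurable.mul hg.aestronglyMeasurable) ?_
  filter_upwards with ω
  have h1 : ‖f ω * g ω‖ = |f ω| * |g ω| := by
    rw [Real.norm_eq_abs, abs_mul]
  rw [h1]
  simp only [Pi.add_apply]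
  nlinarith [sq_nonneg (|f ω| - |g ω|), sq_abs (f ω), sq_abs (g ω)]

/-- `Ŵ` is the unique optimizer of the precommitment mean-variance problem:
if `W` is square-integrable with `E[ξW] ≤ W₀` and
`E[W] − (γ/2)Var[W] = E[Ŵ] − (γ/2)Var[Ŵ]`, then `W = Ŵ` almost surely. -/
theorem precommitment_optimal_unique
    {Ω : Type*} [MeasurableSpace Ω] (P : Measure Ω) [IsProbabilityMeasure P]
    (T r γ W₀ : ℝ) (hT : 0 < T) (hγ : 0 < γ)
    (ξ : Ω → ℝ) (hξ : MemLp ξ 2 P)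
    (hξpos : ∀ᵐ ω ∂P, 0 < ξ ω)
    (hξmean : ∫ ω, ξ ω ∂P = exp (-(r * T)))
    (What : Ω → ℝ)
    (hWhat : ∀ ω, What ω = W₀ * exp (r * T)
        + (1 / γ) * (∫ ω', (ξ ω') ^ 2 ∂P) * exp (2 * (r * T))
        - (1 / γ) * ξ ω * exp (r * T)) :
    ∀ W : Ω → ℝ, MemLp W 2 P → (∫ ω, ξ ω * W ω ∂P) ≤ W₀ →
      (∫ ω, W ω ∂P) - (γ / 2) * variance W P
        = (∫ ω, What ω ∂P) - (γ / 2) * variance What P →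
      W =ᵐ[P] What := by
  intro W hW hbudget heq
  have hγ0 : γ ≠ 0 := ne_of_gt hγ
  set s2 : ℝ := ∫ ω', (ξ ω') ^ 2 ∂P with hs2
  set b : ℝ := exp (r * T) / γ with hb
  set c : ℝ := W₀ * exp (r * T) + (1 / γ) * s2 * exp (2 * (r * T)) with hc
  have h2exp : exp (2 * (r * T)) = exp (r * T) * exp (r * T) := by
    rw [← exp_add]; ring_nf
  have has1 : exp (r * T) * exp (-(r * T)) = 1 := by
    rw [← exp_add]; simp
  have hWfun : What = fun ω => c - b * ξ ω := by
    funext ω; rw [hWhat ω, hc, hb]; ring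
  -- integrability facts
  have hξi : Integrable ξ P := hξ.integrable one_le_two
  have hWi : Integrable W P := hW.integrable one_le_two
  have hξ2i : Integrable (fun ω => ξ ω ^ 2) P := hξ.integrable_sq
  have hW2i : Integrable (fun ω => W ω ^ 2) P := hW.integrable_sq
  have hξWi : Integrable (fun ω => ξ ω * W ω) P := integrable_mul_of_memL2 hξ hW
  have hWhatLp : MemLp What 2 P := by
    rw [hWfun]; exact (memLp_const c).sub (hξ.const_mul b)
  have hWhati : Integrable What P := hWhatLp.integrable one_le_two
  have hWWhati : Integrable (fun ω => W ω * What ω) P := integrable_mul_of_memL2 hW hWhatLp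
  have hWhat2i : Integrable (fun ω => What ω ^ 2) P := hWhatLp.integrable_sq
  -- integral computations
  have hEWhat : ∫ ω, What ω ∂P = c - b * exp (-(r * T)) := by
    rw [hWfun, integral_sub (integrable_const c) (hξi.const_mul b), integral_const,
      integral_const_mul, hξmean]
    simp
  have hWhat2 : ∫ ω, What ω ^ 2 ∂P = c ^ 2 - 2 * b * c * exp (-(r * T)) + b ^ 2 * s2 := by
    have h : (fun ω => What ω ^ 2)
        = fun ω => (c ^ 2 - (2 * b * c) * ξ ω) + b ^ 2 * ξ ω ^ 2 := by
      rw [hWfun]; funext ω; ring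
    have i1 : Integrable (fun ω => c ^ 2 - 2 * b * c * ξ ω) P :=
      (integrable_const _).sub (hξi.const_mul _)
    have i2 : Integrable (fun ω => b ^ 2 * ξ ω ^ 2) P := hξ2i.const_mul _
    have i3 : Integrable (fun ω : Ω => (c : ℝ) ^ 2) P := integrable_const _
    have i4 : Integrable (fun ω => 2 * b * c * ξ ω) P := hξi.const_mul _
    rw [h, integral_add i1 i2, integral_sub i3 i4, integral_const,
      integral_const_mul, integral_const_mul, hξmean]
    simp [hs2]
  have hξWhat : ∫ ω, ξ ω * What ω ∂P = c * exp (-(r * T)) - b * s2 := by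
    have h : (fun ω => ξ ω * What ω) = fun ω => c * ξ ω - b * ξ ω ^ 2 := by
      rw [hWfun]; funext ω; ring
    have i1 : Integrable (fun ω => c * ξ ω) P := hξi.const_mul _
    have i2 : Integrable (fun ω => b * ξ ω ^ 2) P := hξ2i.const_mul _
    rw [h, integral_sub i1 i2, integral_const_mul, integral_const_mul, hξmean]
  have hWWhat : ∫ ω, W ω * What ω ∂P
      = c * (∫ ω, W ω ∂P) - b * (∫ ω, ξ ω * W ω ∂P) := by
    have h : (fun ω => W ω * What ω) = fun ω => c * W ω - b * (ξ ω * W ω) := by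
      rw [hWfun]; funext ω; ring
    have i1 : Integrable (fun ω => c * W ω) P := hWi.const_mul _
    have i2 : Integrable (fun ω => b * (ξ ω * W ω)) P := hξWi.const_mul _
    rw [h, integral_sub i1 i2, integral_const_mul, integral_const_mul]
  have hW0 : c * exp (-(r * T)) - b * s2 = W₀ := by
    rw [hc, hb, h2exp]
    field_simp
    linear_combination (γ * W₀ + s2 * exp (r * T)) * has1
  -- the difference Z
  have hZLp : MemLp (fun ω => W ω - What ω) 2 P := hW.sub hWhatLp
  have hZi : Integrable (fun ω => W ω - What ω) P := hZLp.integrable one_le_two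
  have hEZ : ∫ ω, (W ω - What ω) ∂P = (∫ ω, W ω ∂P) - (∫ ω, What ω ∂P) :=
    integral_sub hWi hWhati
  have hEZ2 : ∫ ω, (W ω - What ω) ^ 2 ∂P
      = (∫ ω, W ω ^ 2 ∂P) - 2 * (∫ ω, W ω * What ω ∂P) + ∫ ω, What ω ^ 2 ∂P := by
    have h : (fun ω => (W ω - What ω) ^ 2)
        = fun ω => (W ω ^ 2 - 2 * (W ω * What ω)) + What ω ^ 2 := by
      funext ω; ring
    have i1 : Integrable (fun ω => W ω ^ 2 - 2 * (W ω * What ω)) P :=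
      hW2i.sub (hWWhati.const_mul _)
    have i2 : Integrable (fun ω => 2 * (W ω * What ω)) P := hWWhati.const_mul _
    rw [h, integral_add i1 hWhat2i, integral_sub hW2i i2, integral_const_mul]
  -- variance formulas
  have hvW : variance W P = (∫ ω, W ω ^ 2 ∂P) - (∫ ω, W ω ∂P) ^ 2 := by
    simpa using variance_eq_sub hW
  have hvWhat : variance What P = (∫ ω, What ω ^ 2 ∂P) - (∫ ω, What ω ∂P) ^ 2 := by
    simpa using variance_eq_sub hWhatLp
  have hvZ : variance (fun ω => W ω - What ω) P
      = (∫ ω, (W ω - What ω) ^ 2 ∂P) - (∫ ω, (W ω - What ω) ∂P) ^ 2 := by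
    simpa using variance_eq_sub hZLp
  -- the key identity
  have key : exp (r * T) * ((∫ ω, ξ ω * W ω ∂P) - W₀)
      = (γ / 2) * variance (fun ω => W ω - What ω) P := by
    rw [hvZ, hEZ2, hEZ, hWWhat, hEWhat, hWhat2]
    rw [hvW, hvWhat, hEWhat, hWhat2] at heq
    rw [hc, hb, h2exp] at heq ⊢
    have hγinv : γ * γ⁻¹ = 1 := mul_inv_cancel₀ hγ0
    linear_combination heq + ((∫ ω, W ω ∂P) + exp (r * T) * γ⁻¹ * exp (-(r * T))) * has1
      - (exp (r * T) * (∫ ω, ξ ω * W ω ∂P) - exp (r * T) * exp (-(r * T)) * (∫ ω, W ω ∂P)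
        + exp (r * T) ^ 2 * γ⁻¹ * s2 - exp (r * T) ^ 2 * γ⁻¹ * exp (-(r * T)) ^ 2) * hγinv
  have hvnn : 0 ≤ variance (fun ω => W ω - What ω) P := variance_nonneg _ _
  have hexp_pos : 0 < exp (r * T) := exp_pos _
  have h1 : exp (r * T) * ((∫ ω, ξ ω * W ω ∂P) - W₀) ≤ 0 :=
    mul_nonpos_of_nonneg_of_nonpos hexp_pos.le (by linarith)
  have h2 : 0 ≤ (γ / 2) * variance (fun ω => W ω - What ω) P :=
    mul_nonneg (by linarith) hvnn
  have h0 : exp (r * T) * ((∫ ω, ξ ω * W ω ∂P) - W₀) = 0 :=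
    le_antisymm h1 (key ▸ h2)
  have hvZ0 : variance (fun ω => W ω - What ω) P = 0 := by
    have h3 : (γ / 2) * variance (fun ω => W ω - What ω) P = 0 := by rw [← key]; exact h0
    rcases mul_eq_zero.mp h3 with h | h
    · exact absurd h (by positivity)
    · exact h
  have hpW : (∫ ω, ξ ω * W ω ∂P) = W₀ := by
    rcases mul_eq_zero.mp h0 with h | h
    · exact absurd h (ne_of_gt hexp_pos)
    · linarith
  -- Z is a.e. constant
  have hev0 : evariance (fun ω => W ω - What ω) P = 0 := by
    have hlt := hZLp.evariance_lt_top
    have := hvZ0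
    rw [variance] at this
    exact (ENNReal.toReal_eq_zero_iff _).mp this |>.resolve_right hlt.ne
  have hZconst : (fun ω => W ω - What ω)
      =ᵐ[P] fun _ => ∫ ω, (W ω - What ω) ∂P :=
    (evariance_eq_zero_iff hZLp.aestronglyMeasurable.aemeasurable).mp hev0
  set m : ℝ := ∫ ω, (W ω - What ω) ∂P with hm
  -- compute E[ξ Z] two ways
  have hξZ1 : ∫ ω, ξ ω * (W ω - What ω) ∂P = m * exp (-(r * T)) := by
    have h : ∫ ω, ξ ω * (W ω - What ω) ∂P = ∫ ω, ξ ω * m ∂P := by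
      refine integral_congr_ae ?_
      filter_upwards [hZconst] with ω hω
      rw [hω]
    rw [h, integral_mul_const, hξmean, mul_comm]
  have hξZ2 : ∫ ω, ξ ω * (W ω - What ω) ∂P = 0 := by
    have h : (fun ω => ξ ω * (W ω - What ω))
        = fun ω => ξ ω * W ω - ξ ω * What ω := by funext ω; ring
    rw [h, integral_sub hξWi (integrable_mul_of_memL2 hξ hWhatLp), hξWhat, hpW, hW0]
    ring
  have hm0 : m = 0 := by
    have hpos : 0 < exp (-(r * T)) := exp_pos _
    have := hξZ1.symm.trans hξZ2
    rcases mul_eq_zero.mp this with h | h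
    · exact h
    · exact absurd h (ne_of_gt hpos)
  filter_upwards [hZconst] with ω hω
  have : W ω - What ω = m := hω
  rw [hm0] at this
  linarith
end

section
/- The optimal value of the precommitment mean-variance problem is U(Ŵ) = E[Ŵ] − (γ/2)Var[Ŵ] = W₀e^{rT} + (1/(2γ))e^{2rT}Var[ξ]. -/
open MeasureTheory ProbabilityTheory Real

/-- The optimal value of the precommitment mean-variance problem:
`U(Ŵ) = E[Ŵ] − (γ/2)Var[Ŵ] = W₀e^{rT} + (1/(2γ))e^{2rT}Var[ξ]`. -/
theorem precommitment_optimal_value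
    {Ω : Type*} [MeasurableSpace Ω] (P : Measure Ω) [IsProbabilityMeasure P]
    (T r γ W₀ : ℝ) (hT : 0 < T) (hγ : 0 < γ)
    (ξ : Ω → ℝ) (hξ : MemLp ξ 2 P)
    (hξpos : ∀ᵐ ω ∂P, 0 < ξ ω)
    (hξmean : ∫ ω, ξ ω ∂P = exp (-(r * T)))
    (What : Ω → ℝ)
    (hWhat : ∀ ω, What ω = W₀ * exp (r * T)
        + (1 / γ) * (∫ ω', (ξ ω') ^ 2 ∂P) * exp (2 * (r * T))
        - (1 / γ) * ξ ω * exp (r * T)) :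
    (∫ ω, What ω ∂P) - (γ / 2) * variance What P
      = W₀ * exp (r * T) + (1 / (2 * γ)) * exp (2 * (r * T)) * variance ξ P := by
  set m2 : ℝ := ∫ ω', (ξ ω') ^ 2 ∂P with hm2
  set c : ℝ := W₀ * exp (r * T) + (1 / γ) * m2 * exp (2 * (r * T)) with hc
  set b : ℝ := -((1 / γ) * exp (r * T)) with hb
  have hWf : What = fun ω => c + b * ξ ω := by
    funext ω; rw [hWhat ω]; ring
  have hξint : Integrable ξ P := hξ.integrable one_le_two
  have hξ2int : Integrable (fun ω => ξ ω ^ 2) P := hξ.integrable_sq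
  have hWmem : MemLp What 2 P := by
    rw [hWf]
    exact (memLp_const c).add (hξ.const_mul b)
  -- integral of What
  have hint : ∫ ω, What ω ∂P = c + b * exp (-(r * T)) := by
    rw [hWf]
    rw [integral_add (integrable_const c) (hξint.const_mul b), integral_const,
      integral_const_mul, hξmean]
    simp
  -- variance of What
  have hvarξ : variance ξ P = m2 - exp (-(r * T)) ^ 2 := by
    rw [variance_eq_sub hξ]
    simp only [Pi.pow_apply]
    rw [hξmean, ← hm2]
  have hW2 : ∫ ω, What ω ^ 2 ∂P = c ^ 2 + 2 * c * b * exp (-(r * T)) + b ^ 2 * m2 := by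
    have : ∀ ω, What ω ^ 2 = c ^ 2 + (2 * c * b) * ξ ω + b ^ 2 * ξ ω ^ 2 := by
      intro ω; rw [hWhat ω]; ring
    rw [integral_congr_ae (Filter.Eventually.of_forall this)]
    have I1 : Integrable (fun a => c ^ 2 + 2 * c * b * ξ a) P :=
      (integrable_const _).add (hξint.const_mul _)
    rw [integral_add I1 (hξ2int.const_mul _),
      integral_add (integrable_const _) (hξint.const_mul _),
      integral_const, integral_const_mul, integral_const_mul, hξmean, ← hm2]
    simp
  have hvarW : variance What P = b ^ 2 * (m2 - exp (-(r * T)) ^ 2) := by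
    rw [variance_eq_sub hWmem]
    simp only [Pi.pow_apply]
    rw [hW2, hint]
    ring
  rw [hint, hvarW, hvarξ, hc, hb]
  have h1 : exp (-(r * T)) * exp (r * T) = 1 := by
    rw [← Real.exp_add]; simp
  have h2 : exp (2 * (r * T)) = exp (r * T) * exp (r * T) := by
    rw [← Real.exp_add]; ring_nf
  have hγ' : γ ≠ 0 := ne_of_gt hγ
  rw [Real.exp_neg] at *
  rw [h2]
  have he : exp (r * T) ≠ 0 := Real.exp_ne_zero _
  field_simp
  ring
end

section
/- Under a constant market price of risk, E[Ŵ] = W₀e^{rT} + (1/γ)(e^{λ²T} − 1), and if λ ≠ 0 then the precommitment wealth dominates the time-consistent wealth in expectation: E[Ŵ] > E[W*]. -/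
open MeasureTheory ProbabilityTheory Real

lemma my_pdf_mul_exp (v : NNReal) (hv : v ≠ 0) (t x : ℝ) :
    gaussianPDFReal 0 v x * rexp (t * x)
      = rexp ((v : ℝ) * t ^ 2 / 2) * gaussianPDFReal ((v : ℝ) * t) v x := by
  have hv' : (0 : ℝ) < (v : ℝ) := by positivity
  simp only [gaussianPDFReal, sub_zero]
  have h : -x ^ 2 / (2 * (v : ℝ)) + t * x
      = (v : ℝ) * t ^ 2 / 2 + -(x - (v : ℝ) * t) ^ 2 / (2 * (v : ℝ)) := by
    field_simp
    ring
  rw [mul_assoc, ← Real.exp_add, h, Real.exp_add]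
  ring

lemma my_gauss_as_density (v : NNReal) (hv : v ≠ 0) :
    gaussianReal 0 v
      = (volume : Measure ℝ).withDensity
          (fun x => ((gaussianPDFReal 0 v x).toNNReal : ENNReal)) := by
  rw [gaussianReal_of_var_ne_zero 0 hv]
  rfl

lemma my_smul_eq (v : NNReal) (y x : ℝ) :
    (gaussianPDFReal 0 v x).toNNReal • y = gaussianPDFReal 0 v x * y := by
  rw [NNReal.smul_def, Real.coe_toNNReal _ (gaussianPDFReal_nonneg 0 v x), smul_eq_mul]

lemma my_integral_exp_gauss (v : NNReal) (hv : v ≠ 0) (t : ℝ) :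
    ∫ x, rexp (t * x) ∂(gaussianReal 0 v) = rexp ((v : ℝ) * t ^ 2 / 2) := by
  rw [my_gauss_as_density v hv,
    integral_withDensity_eq_integral_smul
      ((measurable_gaussianPDFReal 0 v).real_toNNReal) _]
  calc ∫ x, ((gaussianPDFReal 0 v x).toNNReal : NNReal) • rexp (t * x)
      = ∫ x, rexp ((v : ℝ) * t ^ 2 / 2) * gaussianPDFReal ((v : ℝ) * t) v x := by
        refine integral_congr_ae (Filter.Eventually.of_forall fun x => ?_)
        exact (my_smul_eq v _ x).trans (my_pdf_mul_exp v hv t x)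
    _ = rexp ((v : ℝ) * t ^ 2 / 2) := by
        rw [integral_const_mul, integral_gaussianPDFReal_eq_one _ hv, mul_one]

lemma my_integrable_exp_gauss (v : NNReal) (hv : v ≠ 0) (t : ℝ) :
    Integrable (fun x => rexp (t * x)) (gaussianReal 0 v) := by
  rw [my_gauss_as_density v hv,
    integrable_withDensity_iff_integrable_smul
      ((measurable_gaussianPDFReal 0 v).real_toNNReal)]
  refine ((integrable_gaussianPDFReal ((v : ℝ) * t) v).const_mul
    (rexp ((v : ℝ) * t ^ 2 / 2))).congr (Filter.Eventually.of_forall fun x => ?_)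
  exact ((my_smul_eq v _ x).trans (my_pdf_mul_exp v hv t x)).symm

lemma my_pdf_mul_id (v : NNReal) (hv : v ≠ 0) (x : ℝ) :
    gaussianPDFReal 0 v x * x
      = (√(2 * π * (v : ℝ)))⁻¹ * (x * rexp (-(2 * (v : ℝ))⁻¹ * x ^ 2)) := by
  have hv' : (0 : ℝ) < (v : ℝ) := by positivity
  simp only [gaussianPDFReal, sub_zero]
  rw [show -x ^ 2 / (2 * (v : ℝ)) = -(2 * (v : ℝ))⁻¹ * x ^ 2 by field_simp]
  ring

lemma my_integrable_id_pdf (v : NNReal) (hv : v ≠ 0) :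
    Integrable (fun x => gaussianPDFReal 0 v x * x) (volume : Measure ℝ) := by
  have hv' : (0 : ℝ) < (v : ℝ) := by positivity
  have hb : (0 : ℝ) < (2 * (v : ℝ))⁻¹ := by positivity
  have h := (integrable_mul_exp_neg_mul_sq hb).const_mul (√(2 * π * (v : ℝ)))⁻¹
  refine h.congr (Filter.Eventually.of_forall fun x => ?_)
  exact (my_pdf_mul_id v hv x).symm

lemma my_integrable_id_gauss (v : NNReal) (hv : v ≠ 0) :
    Integrable (fun x => x) (gaussianReal 0 v) := by
  rw [my_gauss_as_density v hv,
    integrable_withDensity_iff_integrable_smul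
      ((measurable_gaussianPDFReal 0 v).real_toNNReal)]
  refine (my_integrable_id_pdf v hv).congr (Filter.Eventually.of_forall fun x => ?_)
  exact (my_smul_eq v x x).symm

lemma my_integral_id_gauss (v : NNReal) (hv : v ≠ 0) :
    ∫ x, x ∂(gaussianReal 0 v) = 0 := by
  rw [my_gauss_as_density v hv,
    integral_withDensity_eq_integral_smul
      ((measurable_gaussianPDFReal 0 v).real_toNNReal)]
  have heq : (∫ x, ((gaussianPDFReal 0 v x).toNNReal : NNReal) • x)
      = ∫ x, gaussianPDFReal 0 v x * x :=
    integral_congr_ae (Filter.Eventually.of_forall fun x => my_smul_eq v x x)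
  rw [heq]
  set f : ℝ → ℝ := fun x => gaussianPDFReal 0 v x * x with hf
  have hodd : ∀ x, f (-x) = -f x := by
    intro x
    simp only [hf, gaussianPDFReal, sub_zero, neg_sq]
    ring
  have hint : Integrable f volume := my_integrable_id_pdf v hv
  have hmeas : AEStronglyMeasurable f (Measure.map Neg.neg (volume : Measure ℝ)) := by
    rw [Measure.map_neg_eq_self (volume : Measure ℝ)]
    exact hint.1
  have h1 : (∫ x, f x) = ∫ x, f (-x) := by
    conv_lhs => rw [← Measure.map_neg_eq_self (volume : Measure ℝ)]
    rw [integral_map measurable_neg.aemeasurable hmeas]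
  have h2 : (∫ x, f (-x)) = -∫ x, f x := by
    simp_rw [hodd]
    exact integral_neg f
  have := h1.trans h2
  linarith

/-- Under a constant market price of risk `l = (μ − r)/σ`,
`E[Ŵ] = W₀e^{rT} + (1/γ)(e^{l²T} − 1)`, and if `l ≠ 0` the precommitment
wealth dominates the time-consistent wealth in expectation: `E[Ŵ] > E[W*]`. -/
theorem constant_sharpe_precommitment_dominates_in_mean
    {Ω : Type*} [MeasurableSpace Ω] (P : Measure Ω) [IsProbabilityMeasure P]
    (T r γ W₀ l : ℝ) (hT : 0 < T) (hγ : 0 < γ)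
    (X : Ω → ℝ) (hX : Measurable X)
    (hlaw : P.map X = gaussianReal 0 T.toNNReal)
    (What : Ω → ℝ)
    (hWhat : ∀ ω, What ω = W₀ * exp (r * T) + (1 / γ) * exp (l ^ 2 * T)
        - (1 / γ) * exp (-(l ^ 2 * T / 2) - l * X ω))
    (Wstar : Ω → ℝ)
    (hWstar : ∀ ω, Wstar ω = W₀ * exp (r * T) + (1 / γ) * l ^ 2 * T
        - (1 / γ) * l * X ω) :
    (∫ ω, What ω ∂P) = W₀ * exp (r * T) + (1 / γ) * (exp (l ^ 2 * T) - 1)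
      ∧ (l ≠ 0 → (∫ ω, Wstar ω ∂P) < ∫ ω, What ω ∂P) := by
  set v : NNReal := T.toNNReal with hvdef
  have hv : v ≠ 0 := by
    simp [hvdef, Real.toNNReal_eq_zero, not_le, hT]
  have hvT : ((v : NNReal) : ℝ) = T := Real.coe_toNNReal T hT.le
  -- integrability of exp(-l X) under P
  have hexp_map : Integrable (fun x => rexp ((-l) * x)) (P.map X) := by
    rw [hlaw]; exact my_integrable_exp_gauss v hv (-l)
  have hexp_comp : Integrable (fun ω => rexp ((-l) * X ω)) P :=
    (integrable_map_measure hexp_map.1 hX.aemeasurable).mp hexp_map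
  have hid_map : Integrable (fun x => x) (P.map X) := by
    rw [hlaw]; exact my_integrable_id_gauss v hv
  have hid_comp : Integrable X P := by
    have := (integrable_map_measure hid_map.1 hX.aemeasurable).mp hid_map
    exact this
  -- E[exp(-l X)]
  have hEexp : (∫ ω, rexp ((-l) * X ω) ∂P) = rexp (T * l ^ 2 / 2) := by
    rw [← integral_map hX.aemeasurable hexp_map.1, hlaw, my_integral_exp_gauss v hv (-l)]
    rw [hvT]; ring_nf
  -- E[X] = 0
  have hEX : (∫ ω, X ω ∂P) = 0 := by
    rw [← integral_map hX.aemeasurable hid_map.1, hlaw, my_integral_id_gauss v hv]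
  -- rewrite What
  have hWhat' : What = fun ω => (W₀ * exp (r * T) + (1 / γ) * exp (l ^ 2 * T))
      - ((1 / γ) * exp (-(l ^ 2 * T / 2))) * rexp ((-l) * X ω) := by
    funext ω
    rw [hWhat ω, mul_assoc, ← Real.exp_add]
    ring_nf
  have hEWhat : (∫ ω, What ω ∂P)
      = W₀ * exp (r * T) + (1 / γ) * (exp (l ^ 2 * T) - 1) := by
    rw [hWhat', integral_sub (integrable_const _) (hexp_comp.const_mul _),
      integral_const, integral_const_mul, hEexp]
    simp only [measure_univ, probReal_univ, ENNReal.toReal_one, smul_eq_mul, one_mul]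
    rw [mul_assoc, ← Real.exp_add]
    have : -(l ^ 2 * T / 2) + T * l ^ 2 / 2 = 0 := by ring
    rw [this, Real.exp_zero]
    ring
  refine ⟨hEWhat, fun hl => ?_⟩
  have hWstar' : Wstar = fun ω => (W₀ * exp (r * T) + (1 / γ) * l ^ 2 * T)
      - ((1 / γ) * l) * X ω := by
    funext ω; rw [hWstar ω]
  have hEWstar : (∫ ω, Wstar ω ∂P) = W₀ * exp (r * T) + (1 / γ) * l ^ 2 * T := by
    rw [hWstar', integral_sub (integrable_const _) (hid_comp.const_mul _),
      integral_const, integral_const_mul, hEX]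
    simp
  rw [hEWstar, hEWhat]
  have ha : 0 < l ^ 2 * T := by positivity
  have := Real.add_one_lt_exp (x := l ^ 2 * T) ha.ne'
  have hγ' : 0 < 1 / γ := by positivity
  nlinarith
end

section
/- Under a constant market price of risk, the initial mean-variance value functions of the two strategies are U(Ŵ) = W₀e^{rT} + (1/(2γ))(e^{λ²T} − 1) and U(W*) = W₀e^{rT} + (1/(2γ))λ²T; if λ ≠ 0 then the precommitment investor owns the advantage in terms of the initial value function: U(Ŵ) > U(W*). -/
open MeasureTheory ProbabilityTheory Real Filter
open scoped ENNReal NNReal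

namespace MVAux

lemma aux_hasDerivAt {b : ℝ} (hb : b ≠ 0) (x : ℝ) :
    HasDerivAt (fun y : ℝ => -(1/(2*b)) * rexp (-b * y^2)) (x * rexp (-b * x^2)) x := by
  have h1 : HasDerivAt (fun y : ℝ => -b * y^2) (-b * (2*x)) x := by
    simpa using (hasDerivAt_pow 2 x).const_mul (-b)
  have h2 := h1.exp.const_mul (-(1/(2*b)))
  refine h2.congr_deriv ?_
  field_simp

lemma aux_tendsto {b : ℝ} (hb : 0 < b) {lf : Filter ℝ}
    (h : Tendsto (fun y : ℝ => y^2) lf atTop) :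
    Tendsto (fun y : ℝ => -(1/(2*b)) * rexp (-b * y^2)) lf (nhds 0) := by
  rw [show (0:ℝ) = -(1/(2*b)) * 0 by ring]
  apply Tendsto.const_mul
  have h2 : Tendsto (fun y : ℝ => b * y^2) lf atTop := h.const_mul_atTop hb
  have h4 : Tendsto (fun y : ℝ => -b * y^2) lf atBot := by
    simpa [Function.comp_def, neg_mul] using tendsto_neg_atTop_atBot.comp h2
  exact Real.tendsto_exp_atBot.comp h4

lemma sq_tendsto_atBot : Tendsto (fun y : ℝ => y^2) atBot atTop := by
  have h1 : Tendsto (fun y : ℝ => |y|) atBot atTop := tendsto_abs_atBot_atTop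
  have h2 : Tendsto (fun x : ℝ => x^2) atTop atTop := tendsto_pow_atTop two_ne_zero
  simpa [Function.comp_def, sq_abs] using h2.comp h1

lemma integral_self_mul_exp {b : ℝ} (hb : 0 < b) :
    ∫ x : ℝ, x * rexp (-b * x ^ 2) = 0 := by
  have h := integral_of_hasDerivAt_of_tendsto (aux_hasDerivAt hb.ne' )
    (by simpa using integrable_mul_exp_neg_mul_sq hb)
    (aux_tendsto hb sq_tendsto_atBot)
    (aux_tendsto hb (tendsto_pow_atTop two_ne_zero))
  simpa using h

lemma integral_sq_mul_exp {b : ℝ} (hb : 0 < b) :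
    ∫ x : ℝ, x^2 * rexp (-b * x ^ 2) = √(π/b) / (2*b) := by
  have hu : ∀ x : ℝ, HasDerivAt (fun y : ℝ => y) ((fun _ : ℝ => (1:ℝ)) x) x :=
    fun x => hasDerivAt_id x
  have hv := aux_hasDerivAt hb.ne'
  have huv' : Integrable ((fun x : ℝ => x) * fun x => x * rexp (-b * x^2)) := by
    have h2 := integrable_rpow_mul_exp_neg_mul_sq hb (by norm_num : (-1:ℝ) < 2)
    apply h2.congr
    filter_upwards with x
    rw [show (2:ℝ) = ((2:ℕ):ℝ) by norm_num, rpow_natCast]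
    simp [Pi.mul_apply]; ring
  have hu'v : Integrable ((fun _ : ℝ => (1:ℝ)) * fun x : ℝ => -(1/(2*b)) * rexp (-b * x^2)) := by
    have := (integrable_exp_neg_mul_sq hb).const_mul (-(1/(2*b)))
    apply this.congr
    filter_upwards with x
    simp [Pi.mul_apply]
  have huv : Integrable ((fun x : ℝ => x) * fun x : ℝ => -(1/(2*b)) * rexp (-b * x^2)) := by
    have := (integrable_mul_exp_neg_mul_sq hb).const_mul (-(1/(2*b)))
    apply this.congr
    filter_upwards with x
    simp [Pi.mul_apply]; ring
  have h := integral_mul_deriv_eq_deriv_mul_of_integrable (fun x _ => hu x) (fun x _ => hv x) huv' hu'v huv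
  have hL : (∫ x : ℝ, x * (x * rexp (-b * x^2))) = ∫ x : ℝ, x^2 * rexp (-b * x ^ 2) := by
    congr 1; funext x; ring
  rw [hL] at h
  rw [h]
  have : (∫ x : ℝ, (1:ℝ) * (-(1/(2*b)) * rexp (-b * x^2))) = -(1/(2*b)) * √(π/b) := by
    simp_rw [one_mul]
    rw [integral_const_mul]
    congr 1
    simpa using integral_gaussian b
  rw [this]
  ring

section Gauss

variable {v : ℝ≥0}

lemma vpos (hv : v ≠ 0) : (0:ℝ) < (v:ℝ) := by
  exact_mod_cast pos_iff_ne_zero.mpr hv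

lemma integral_gaussianReal_eq (hv : v ≠ 0) (f : ℝ → ℝ) :
    ∫ x, f x ∂(gaussianReal 0 v) = ∫ x, gaussianPDFReal 0 v x * f x := by
  rw [gaussianReal_of_var_ne_zero _ hv]
  have h1 : gaussianPDF 0 v = fun x => ((Real.toNNReal (gaussianPDFReal 0 v x) : ℝ≥0) : ℝ≥0∞) := rfl
  rw [h1, integral_withDensity_eq_integral_smul
    ((measurable_gaussianPDFReal 0 v).real_toNNReal) f]
  refine integral_congr_ae (Filter.Eventually.of_forall fun x => ?_)
  simp [NNReal.smul_def, Real.coe_toNNReal _ (gaussianPDFReal_nonneg 0 v x)]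

lemma integrable_gaussianReal_iff (hv : v ≠ 0) (f : ℝ → ℝ) :
    Integrable f (gaussianReal 0 v) ↔
      Integrable (fun x => f x * gaussianPDFReal 0 v x) := by
  rw [gaussianReal_of_var_ne_zero _ hv,
    integrable_withDensity_iff (measurable_gaussianPDF 0 v)
      (Filter.Eventually.of_forall fun x => ENNReal.ofReal_lt_top)]
  rw [show (fun x => f x * (gaussianPDF 0 v x).toReal)
      = fun x => f x * gaussianPDFReal 0 v x from funext fun x => by
    rw [gaussianPDF, ENNReal.toReal_ofReal (gaussianPDFReal_nonneg _ _ _)]]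

lemma pdf_mul_exp (hv : v ≠ 0) (a x : ℝ) :
    gaussianPDFReal 0 v x * rexp (a * x)
      = rexp (a^2 * v / 2) * gaussianPDFReal (a*v) v x := by
  have hv' : (v:ℝ) ≠ 0 := (vpos hv).ne'
  simp only [gaussianPDFReal]
  rw [mul_assoc, ← Real.exp_add, mul_left_comm, ← Real.exp_add]
  congr 1
  field_simp
  ring

lemma integral_exp_gauss (hv : v ≠ 0) (a : ℝ) :
    ∫ x, rexp (a * x) ∂(gaussianReal 0 v) = rexp (a^2 * v / 2) := by
  rw [integral_gaussianReal_eq hv]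
  simp_rw [pdf_mul_exp hv]
  rw [integral_const_mul, integral_gaussianPDFReal_eq_one _ hv, mul_one]

lemma integrable_exp_gauss (hv : v ≠ 0) (a : ℝ) :
    Integrable (fun x => rexp (a * x)) (gaussianReal 0 v) := by
  rw [integrable_gaussianReal_iff hv]
  have : (fun x => rexp (a*x) * gaussianPDFReal 0 v x)
      = fun x => rexp (a^2 * v / 2) * gaussianPDFReal (a*v) v x := by
    funext x; rw [mul_comm, pdf_mul_exp hv]
  rw [this]
  exact (integrable_gaussianPDFReal _ _).const_mul _

lemma pdf_eq (x : ℝ) : gaussianPDFReal 0 v x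
    = (√(2*π*v))⁻¹ * rexp (-(2*(v:ℝ))⁻¹ * x^2) := by
  simp only [gaussianPDFReal, sub_zero]
  congr 1
  ring

lemma integral_id_gauss (hv : v ≠ 0) : ∫ x, x ∂(gaussianReal 0 v) = 0 := by
  have hb : (0:ℝ) < (2*(v:ℝ))⁻¹ := by
    have := vpos hv; positivity
  rw [integral_gaussianReal_eq hv]
  have : (fun x => gaussianPDFReal 0 v x * x)
      = fun x => (√(2*π*v))⁻¹ * (x * rexp (-(2*(v:ℝ))⁻¹ * x^2)) := by
    funext x; rw [pdf_eq]; ring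
  rw [this, integral_const_mul, integral_self_mul_exp hb, mul_zero]

lemma integrable_id_gauss (hv : v ≠ 0) :
    Integrable (fun x : ℝ => x) (gaussianReal 0 v) := by
  have hb : (0:ℝ) < (2*(v:ℝ))⁻¹ := by
    have := vpos hv; positivity
  rw [integrable_gaussianReal_iff hv]
  have h := (integrable_mul_exp_neg_mul_sq hb).const_mul ((√(2*π*v))⁻¹)
  apply h.congr
  filter_upwards with x
  rw [pdf_eq]; ring

lemma integral_sq_gauss (hv : v ≠ 0) : ∫ x, x^2 ∂(gaussianReal 0 v) = v := by
  have hvp := vpos hv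
  have hb : (0:ℝ) < (2*(v:ℝ))⁻¹ := by positivity
  rw [integral_gaussianReal_eq hv]
  have : (fun x => gaussianPDFReal 0 v x * x^2)
      = fun x => (√(2*π*v))⁻¹ * (x^2 * rexp (-(2*(v:ℝ))⁻¹ * x^2)) := by
    funext x; rw [pdf_eq]; ring
  rw [this, integral_const_mul, integral_sq_mul_exp hb]
  rw [show π / ((2*(v:ℝ))⁻¹) = 2*π*v by field_simp]
  rw [show (2*((2*(v:ℝ))⁻¹)) = (v:ℝ)⁻¹ by field_simp]
  rw [div_eq_mul_inv, inv_inv, ← mul_assoc, inv_mul_cancel₀, one_mul]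
  exact (Real.sqrt_ne_zero'.mpr (by positivity))

lemma integrable_sq_gauss (hv : v ≠ 0) :
    Integrable (fun x : ℝ => x^2) (gaussianReal 0 v) := by
  have hvp := vpos hv
  have hb : (0:ℝ) < (2*(v:ℝ))⁻¹ := by positivity
  rw [integrable_gaussianReal_iff hv]
  have h2 := (integrable_rpow_mul_exp_neg_mul_sq hb (by norm_num : (-1:ℝ) < 2)).const_mul
    ((√(2*π*v))⁻¹)
  apply h2.congr
  filter_upwards with x
  rw [show (2:ℝ) = ((2:ℕ):ℝ) by norm_num, rpow_natCast, pdf_eq]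
  ring

end Gauss

end MVAux

/-- Under a constant market price of risk `l = (μ − r)/σ`, the initial
mean-variance value functions `U(W) = E[W] − (γ/2)Var[W]` of the two
strategies are `U(Ŵ) = W₀e^{rT} + (1/(2γ))(e^{l²T} − 1)` and
`U(W*) = W₀e^{rT} + (1/(2γ))l²T`; if `l ≠ 0` then the precommitment investor
owns the advantage in terms of the initial value function: `U(Ŵ) > U(W*)`. -/
theorem constant_sharpe_value_function_comparison
    {Ω : Type*} [MeasurableSpace Ω] (P : Measure Ω) [IsProbabilityMeasure P]
    (T r γ W₀ l : ℝ) (hT : 0 < T) (hγ : 0 < γ)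
    (X : Ω → ℝ) (hX : Measurable X)
    (hlaw : P.map X = gaussianReal 0 T.toNNReal)
    (What : Ω → ℝ)
    (hWhat : ∀ ω, What ω = W₀ * exp (r * T) + (1 / γ) * exp (l ^ 2 * T)
        - (1 / γ) * exp (-(l ^ 2 * T / 2) - l * X ω))
    (Wstar : Ω → ℝ)
    (hWstar : ∀ ω, Wstar ω = W₀ * exp (r * T) + (1 / γ) * l ^ 2 * T
        - (1 / γ) * l * X ω)
    (U : (Ω → ℝ) → ℝ)
    (hU : ∀ W : Ω → ℝ, U W = (∫ ω, W ω ∂P) - (γ / 2) * variance W P) :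
    U What = W₀ * exp (r * T) + (1 / (2 * γ)) * (exp (l ^ 2 * T) - 1)
      ∧ U Wstar = W₀ * exp (r * T) + (1 / (2 * γ)) * (l ^ 2 * T)
      ∧ (l ≠ 0 → U Wstar < U What) := by
  have hv : T.toNNReal ≠ 0 := by
    simp [Real.toNNReal_eq_zero, not_le, hT]
  have hvT : ((T.toNNReal : ℝ≥0) : ℝ) = T := Real.coe_toNNReal T hT.le
  -- transfer of integrals and integrability along the law of X
  have hIntEq : ∀ f : ℝ → ℝ, Measurable f →
      ∫ ω, f (X ω) ∂P = ∫ x, f x ∂(gaussianReal 0 T.toNNReal) := by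
    intro f hf
    rw [← hlaw]
    exact (integral_map hX.aemeasurable hf.aestronglyMeasurable).symm
  have hInt : ∀ f : ℝ → ℝ, Measurable f →
      Integrable f (gaussianReal 0 T.toNNReal) → Integrable (fun ω => f (X ω)) P := by
    intro f hf h
    exact (integrable_map_measure hf.aestronglyMeasurable hX.aemeasurable).mp
      (by rwa [hlaw])
  -- the mean-variance value of an affine transform
  have key : ∀ (c k : ℝ) (f : Ω → ℝ), MemLp f 2 P →
      U (fun ω => c - k * f ω)
        = c - k * (∫ ω, f ω ∂P)
          - γ/2 * (k^2 * ((∫ ω, (f ω)^2 ∂P) - (∫ ω, f ω ∂P)^2)) := by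
    intro c k f hf
    have hfi : Integrable f P := hf.integrable one_le_two
    have hfi2 : Integrable (fun ω => (f ω)^2) P := hf.integrable_sq
    have hW : MemLp (fun ω => c - k * f ω) 2 P := (memLp_const c).sub (hf.const_mul k)
    rw [hU, variance_eq_sub hW]
    have hC1 : Integrable (fun ω => k * f ω) P := hfi.const_mul k
    have h1 : ∫ ω, (c - k * f ω) ∂P = c - k * ∫ ω, f ω ∂P := by
      rw [integral_sub (integrable_const c) hC1, integral_const_mul, integral_const]
      simp
    have h2 : ∫ ω, ((fun ω => c - k * f ω) ^ 2) ω ∂P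
        = c^2 - (2*c*k) * (∫ ω, f ω ∂P) + k^2 * ∫ ω, (f ω)^2 ∂P := by
      have he : ∀ ω, ((fun ω => c - k * f ω) ^ 2) ω
          = (c^2 - (2*c*k) * f ω) + k^2 * (f ω)^2 := by
        intro ω; simp [Pi.pow_apply]; ring
      have hC2 : Integrable (fun ω => (2*c*k) * f ω) P := hfi.const_mul _
      have hC3 : Integrable (fun ω => k^2 * (f ω)^2) P := hfi2.const_mul _
      have hC4 : Integrable (fun ω => c^2 - (2*c*k) * f ω) P := by
        have := (integrable_const (c^2)).sub hC2
        exact this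
      rw [integral_congr_ae (Filter.Eventually.of_forall he)]
      rw [integral_add hC4 hC3, integral_sub (integrable_const _) hC2, integral_const_mul,
        integral_const_mul, integral_const]
      simp
    rw [h1, h2]
    ring
  -- integrals for the precommitment strategy
  have hexp_meas : ∀ a : ℝ, Measurable fun x : ℝ => rexp (a*x) :=
    fun a => (measurable_id.const_mul a).exp
  have hsq : ∀ x : ℝ, (rexp ((-l) * x))^2 = rexp ((-(2*l)) * x) := by
    intro x; rw [sq, ← Real.exp_add]; congr 1; ring
  have hm1 : ∫ ω, rexp ((-l) * X ω) ∂P = rexp (l^2*T/2) := by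
    have h := hIntEq (fun x => rexp ((-l)*x)) (hexp_meas (-l))
    rw [MVAux.integral_exp_gauss hv,
      show (-l)^2 * ((T.toNNReal : ℝ≥0) : ℝ)/2 = l^2*T/2 by rw [hvT]; ring] at h
    simpa using h
  have hm2 : ∫ ω, (rexp ((-l) * X ω))^2 ∂P = rexp (l^2*T/2) ^ 4 := by
    simp_rw [hsq]
    have h := hIntEq (fun x => rexp ((-(2*l))*x)) (hexp_meas (-(2*l)))
    rw [MVAux.integral_exp_gauss hv,
      show (-(2*l))^2 * ((T.toNNReal : ℝ≥0) : ℝ)/2 = (l^2*T/2)*4 by rw [hvT]; ring] at h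
    rw [show rexp ((l^2*T/2)*4) = rexp (l^2*T/2)^4 by
      rw [← Real.exp_nat_mul]; congr 1; push_cast; ring] at h
    simpa using h
  have hmem1 : MemLp (fun ω => rexp ((-l) * X ω)) 2 P := by
    have hms : AEStronglyMeasurable (fun ω => rexp ((-l) * X ω)) P :=
      ((hexp_meas (-l)).comp hX).aestronglyMeasurable
    rw [memLp_two_iff_integrable_sq hms]
    have : (fun ω => (rexp ((-l) * X ω))^2) = fun ω => rexp ((-(2*l)) * X ω) := by
      funext ω; exact hsq _
    rw [this]
    exact hInt _ (hexp_meas _) (MVAux.integrable_exp_gauss hv _)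
  have hWhat' : What = fun ω => (W₀ * exp (r * T) + (1/γ) * exp (l^2*T))
      - ((1/γ) * rexp (-(l^2*T/2))) * rexp ((-l) * X ω) := by
    funext ω
    rw [hWhat ω, show -(l^2*T/2) - l * X ω = (-(l^2*T/2)) + (-l) * X ω by ring,
      Real.exp_add]
    ring
  have hEsq : exp (l^2*T) = rexp (l^2*T/2)^2 := by
    rw [← Real.exp_nat_mul]; congr 1; push_cast; ring
  have hUWhat : U What = W₀ * exp (r * T) + (1 / (2 * γ)) * (exp (l ^ 2 * T) - 1) := by
    rw [hWhat', key _ _ _ hmem1, hm1, hm2, Real.exp_neg, hEsq]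
    have ha : rexp (l^2*T/2) ≠ 0 := Real.exp_ne_zero _
    field_simp
    ring
  -- integrals for the time-consistent strategy
  have hM0 : ∫ ω, X ω ∂P = 0 := by
    have h := hIntEq (fun x => x) measurable_id
    rw [MVAux.integral_id_gauss hv] at h
    simpa using h
  have hsqm : Measurable (fun x : ℝ => x^2) := measurable_id.pow_const 2
  have hM2 : ∫ ω, (X ω)^2 ∂P = T := by
    have h := hIntEq (fun x => x^2) hsqm
    rw [MVAux.integral_sq_gauss hv, hvT] at h
    simpa using h
  have hmemX : MemLp X 2 P := by
    rw [memLp_two_iff_integrable_sq hX.aestronglyMeasurable]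
    exact hInt _ hsqm (MVAux.integrable_sq_gauss hv)
  have hWstar' : Wstar = fun ω => (W₀ * exp (r*T) + (1/γ)*l^2*T) - ((1/γ)*l) * X ω := by
    funext ω; exact hWstar ω
  have hUWstar : U Wstar = W₀ * exp (r * T) + (1 / (2 * γ)) * (l ^ 2 * T) := by
    rw [hWstar', key _ _ _ hmemX, hM0, hM2]
    field_simp
    ring
  refine ⟨hUWhat, hUWstar, fun hl => ?_⟩
  rw [hUWhat, hUWstar]
  apply add_lt_add_right
  have h2γ : 0 < 1/(2*γ) := by positivity
  apply (mul_lt_mul_iff_right₀ h2γ).mpr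
  have hx : l^2*T ≠ 0 := mul_ne_zero (pow_ne_zero 2 hl) hT.ne'
  have := Real.add_one_lt_exp hx
  linarith
end
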